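/- Let r be a unit-speed biregular curve on a circular cylinder of radius ρ with axis a, and let ψ = sin²α = 1 - ⟨t,a⟩². Then ρ² = ψ²/κ² + (1/τ²)·(3ψ'/(2κ) - ψκ'/κ²)². -/

import Mathlib

open RealInnerProductSpace

theorem stmt_5 (I : Set ℝ) (hI : IsOpen I)
    (r t n b : ℝ → EuclideanSpace ℝ (Fin 3)) (κ τ : ℝ → ℝ)
    (a : EuclideanSpace ℝ (Fin 3)) (ρ : ℝ) (ha : ‖a‖ = 1) (hρ : 0 < ρ)
    (hr' : ∀ s, HasDerivAt r (t s) s)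
    (htu : ∀ s, ‖t s‖ = 1) (hnu : ∀ s, ‖n s‖ = 1) (hbu : ∀ s, ‖b s‖ = 1)
    (htn : ∀ s, ⟪t s, n s⟫ = 0) (htb : ∀ s, ⟪t s, b s⟫ = 0)
    (hnb : ∀ s, ⟪n s, b s⟫ = 0)
    (ht' : ∀ s, HasDerivAt t (κ s • n s) s)
    (hn' : ∀ s, HasDerivAt n ((-κ s) • t s + τ s • b s) s)
    (hb' : ∀ s, HasDerivAt b ((-τ s) • n s) s)
    (hκ : ∀ s, 0 < κ s) (hτ : ∀ s, τ s ≠ 0)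
    (hκd : Differentiable ℝ κ)
    (hcyl : ∀ s ∈ I, ‖r s‖ ^ 2 - ⟪r s, a⟫ ^ 2 = ρ ^ 2)
    (ψ : ℝ → ℝ) (hψ : ∀ s, ψ s = 1 - ⟪t s, a⟫ ^ 2) :
    ∀ s ∈ I,
      ρ ^ 2 = ψ s ^ 2 / κ s ^ 2 +
        (1 / τ s ^ 2) * (3 * deriv ψ s / (2 * κ s) - ψ s * deriv κ s / κ s ^ 2) ^ 2 := by
  set u : ℝ → ℝ := fun x => ⟪r x, t x⟫ - ⟪r x, a⟫ * ⟪t x, a⟫ with hu_def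
  set v : ℝ → ℝ := fun x => ⟪r x, n x⟫ - ⟪r x, a⟫ * ⟪n x, a⟫ with hv_def
  set w : ℝ → ℝ := fun x => ⟪r x, b x⟫ - ⟪r x, a⟫ * ⟪b x, a⟫ with hw_def
  have htt : ∀ x, ⟪t x, t x⟫ = 1 := fun x => by
    rw [real_inner_self_eq_norm_sq, htu x]; norm_num
  have hnn : ∀ x, ⟪n x, n x⟫ = 1 := fun x => by
    rw [real_inner_self_eq_norm_sq, hnu x]; norm_num
  have hbb : ∀ x, ⟪b x, b x⟫ = 1 := fun x => by
    rw [real_inner_self_eq_norm_sq, hbu x]; norm_num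
  have hra' : ∀ x, HasDerivAt (fun y => ⟪r y, a⟫) (⟪t x, a⟫) x := by
    intro x
    simpa only [inner_zero_right, zero_add, add_zero]
      using (hr' x).inner ℝ (hasDerivAt_const x a)
  have hta' : ∀ x, HasDerivAt (fun y => ⟪t y, a⟫) (κ x * ⟪n x, a⟫) x := by
    intro x
    simpa only [inner_zero_right, zero_add, add_zero, real_inner_smul_left]
      using (ht' x).inner ℝ (hasDerivAt_const x a)
  have hψ' : ∀ x, HasDerivAt ψ (-(2 * ⟪t x, a⟫ * (κ x * ⟪n x, a⟫))) x := by
    intro x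
    have h2 : HasDerivAt (fun y => 1 - ⟪t y, a⟫ ^ 2)
        (-(2 * ⟪t x, a⟫ * (κ x * ⟪n x, a⟫))) x := by
      have h3 := ((hta' x).pow 2).const_sub 1
      convert h3 using 1 <;> try rfl
      ring
    have hfun : ψ = fun y => 1 - ⟪t y, a⟫ ^ 2 := funext hψ
    rw [hfun]; exact h2
  have hu' : ∀ x, HasDerivAt u (ψ x + κ x * v x) x := by
    intro x
    have h1 : HasDerivAt (fun y => ⟪r y, t y⟫) (⟪r x, κ x • n x⟫ + ⟪t x, t x⟫) x :=
      (hr' x).inner ℝ (ht' x)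
    have h3 := h1.sub ((hra' x).mul (hta' x))
    convert h3 using 1 <;> try rfl
    simp only [hv_def, real_inner_smul_right, htt x, hψ x]
    ring
  have hv' : ∀ x, HasDerivAt v
      (-(κ x) * u x + τ x * w x - ⟪t x, a⟫ * ⟪n x, a⟫) x := by
    intro x
    have h1 : HasDerivAt (fun y => ⟪r y, n y⟫)
        (⟪r x, (-κ x) • t x + τ x • b x⟫ + ⟪t x, n x⟫) x :=
      (hr' x).inner ℝ (hn' x)
    have h2 : HasDerivAt (fun y => ⟪n y, a⟫)
        (⟪(-κ x) • t x + τ x • b x, a⟫) x := by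
      simpa only [inner_zero_right, zero_add, add_zero]
        using (hn' x).inner ℝ (hasDerivAt_const x a)
    have h3 := h1.sub ((hra' x).mul h2)
    convert h3 using 1 <;> try rfl
    simp only [hu_def, hw_def, inner_add_left, inner_add_right, real_inner_smul_left,
      real_inner_smul_right, htn x]
    ring
  intro s hs
  have hf' : ∀ x, HasDerivAt (fun y => ⟪r y, r y⟫ - ⟪r y, a⟫ ^ 2) (2 * u x) x := by
    intro x
    have h1 : HasDerivAt (fun y => ⟪r y, r y⟫) (⟪r x, t x⟫ + ⟪t x, r x⟫) x :=
      (hr' x).inner ℝ (hr' x)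
    have h3 := h1.sub ((hra' x).pow 2)
    convert h3 using 1 <;> try rfl
    simp only [hu_def, real_inner_comm (t x) (r x)]
    ring
  have hu0 : ∀ x ∈ I, u x = 0 := by
    intro x hx
    have heq : (fun y => ⟪r y, r y⟫ - ⟪r y, a⟫ ^ 2) =ᶠ[nhds x] fun _ => ρ ^ 2 := by
      filter_upwards [hI.mem_nhds hx] with y hy
      rw [real_inner_self_eq_norm_sq]
      exact hcyl y hy
    have hconst : HasDerivAt (fun y => ⟪r y, r y⟫ - ⟪r y, a⟫ ^ 2) 0 x :=
      (hasDerivAt_const x (ρ ^ 2)).congr_of_eventuallyEq heq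
    have := (hf' x).unique hconst
    linarith
  have hpv0 : ∀ x ∈ I, ψ x + κ x * v x = 0 := by
    intro x hx
    have heq : u =ᶠ[nhds x] fun _ => 0 := by
      filter_upwards [hI.mem_nhds hx] with y hy using hu0 y hy
    exact (hu' x).unique ((hasDerivAt_const x 0).congr_of_eventuallyEq heq)
  have hg' : HasDerivAt (fun y => ψ y + κ y * v y)
      (-(2 * ⟪t s, a⟫ * (κ s * ⟪n s, a⟫)) +
        (deriv κ s * v s + κ s * (-(κ s) * u s + τ s * w s - ⟪t s, a⟫ * ⟪n s, a⟫))) s :=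
    (hψ' s).add (((hκd s).hasDerivAt).mul (hv' s))
  have hkey : (-(2 * ⟪t s, a⟫ * (κ s * ⟪n s, a⟫)) +
      (deriv κ s * v s + κ s * (-(κ s) * u s + τ s * w s - ⟪t s, a⟫ * ⟪n s, a⟫))) = 0 := by
    have heq : (fun y => ψ y + κ y * v y) =ᶠ[nhds s] fun _ => 0 := by
      filter_upwards [hI.mem_nhds hs] with y hy using hpv0 y hy
    exact hg'.unique ((hasDerivAt_const s 0).congr_of_eventuallyEq heq)
  have hκs : κ s ≠ 0 := (hκ s).ne'
  have hτs : τ s ≠ 0 := hτ s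
  have hdψ : deriv ψ s = -(2 * ⟪t s, a⟫ * (κ s * ⟪n s, a⟫)) := (hψ' s).deriv
  -- orthonormal basis
  have hon : Orthonormal ℝ ![t s, n s, b s] := by
    rw [orthonormal_iff_ite]
    intro i j
    fin_cases i <;> fin_cases j <;>
      simp only [Matrix.cons_val_zero, Matrix.cons_val_one, Matrix.head_cons,
        Matrix.cons_val_two, Matrix.tail_cons, Fin.isValue, Fin.zero_eta, Fin.mk_one] <;>
      first
        | simpa using htt s
        | simpa using hnn s
        | simpa using hbb s
        | simpa using htn s
        | simpa using htb s
        | simpa using hnb s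
        | simpa [real_inner_comm (n s) (t s)] using htn s
        | simpa [real_inner_comm (b s) (t s)] using htb s
        | simpa [real_inner_comm (b s) (n s)] using hnb s
  have hcard : Fintype.card (Fin 3) = Module.finrank ℝ (EuclideanSpace ℝ (Fin 3)) := by
    simp [finrank_euclideanSpace_fin]
  let B : OrthonormalBasis (Fin 3) ℝ (EuclideanSpace ℝ (Fin 3)) :=
    (basisOfOrthonormalOfCardEqFinrank hon hcard).toOrthonormalBasis (by
      rwa [coe_basisOfOrthonormalOfCardEqFinrank])
  have hB : ∀ i, B i = ![t s, n s, b s] i := by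
    intro i
    simp [B, Module.Basis.coe_toOrthonormalBasis, coe_basisOfOrthonormalOfCardEqFinrank]
  set P : EuclideanSpace ℝ (Fin 3) := r s - ⟪r s, a⟫ • a with hP_def
  have haa : ⟪a, a⟫ = 1 := by
    rw [real_inner_self_eq_norm_sq, ha]; norm_num
  have hPP : ⟪P, P⟫ = ρ ^ 2 := by
    rw [hP_def]
    simp only [inner_sub_left, inner_sub_right, real_inner_smul_left,
      real_inner_smul_right, haa, real_inner_comm a (r s)]
    rw [real_inner_self_eq_norm_sq]
    linear_combination hcyl s hs + (⟪a, r s⟫ + ⟪r s, a⟫) * real_inner_comm a (r s)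
  have hPt : ⟪P, t s⟫ = u s := by
    rw [hP_def]
    simp only [hu_def, inner_sub_left, real_inner_smul_left, real_inner_comm a (t s)]
  have hPn : ⟪P, n s⟫ = v s := by
    rw [hP_def]
    simp only [hv_def, inner_sub_left, real_inner_smul_left, real_inner_comm a (n s)]
  have hPb : ⟪P, b s⟫ = w s := by
    rw [hP_def]
    simp only [hw_def, inner_sub_left, real_inner_smul_left, real_inner_comm a (b s)]
  have hsum : ρ ^ 2 = u s ^ 2 + v s ^ 2 + w s ^ 2 := by
    have hpar := (B.sum_inner_mul_inner P P).symm
    rw [Fin.sum_univ_three, hB 0, hB 1, hB 2] at hpar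
    simp only [Matrix.cons_val_zero, Matrix.cons_val_one, Matrix.head_cons,
      Matrix.cons_val_two, Matrix.tail_cons] at hpar
    have h1 : ⟪t s, P⟫ = u s := (real_inner_comm P (t s)).trans hPt
    have h2 : ⟪n s, P⟫ = v s := (real_inner_comm P (n s)).trans hPn
    have h3 : ⟪b s, P⟫ = w s := (real_inner_comm P (b s)).trans hPb
    rw [hPt, hPn, hPb, h1, h2, h3] at hpar
    rw [← hPP, hpar]
    ring
  have hus : u s = 0 := hu0 s hs
  have hvs : κ s * v s = -ψ s := by have := hpv0 s hs; linarith
  have hv_eq : v s = -ψ s / κ s := by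
    rw [eq_div_iff hκs]
    linear_combination hvs
  have htna : ⟪t s, a⟫ * ⟪n s, a⟫ = -deriv ψ s / (2 * κ s) := by
    rw [hdψ]
    field_simp
  rw [hus, ← hdψ, htna] at hkey
  have e1 : κ s * (-(κ s) * 0 + τ s * w s - -deriv ψ s / (2 * κ s)) =
      κ s * (τ s * w s) + deriv ψ s / 2 := by
    field_simp
    ring
  rw [e1, hv_eq] at hkey
  have hclear : 2 * κ s ^ 2 * (τ s * w s) = 2 * ψ s * deriv κ s - 3 * κ s * deriv ψ s := by
    field_simp at hkey
    linear_combination hkey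
  have hw2 : w s = (2 * ψ s * deriv κ s - 3 * κ s * deriv ψ s) / (2 * κ s ^ 2 * τ s) := by
    rw [eq_div_iff (mul_ne_zero (by positivity) hτs)]
    linear_combination hclear
  have hvs2 : v s ^ 2 = ψ s ^ 2 / κ s ^ 2 := by
    rw [hv_eq]
    ring
  rw [hsum, hus, hvs2, hw2]
  field_simp
  ring
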